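/- Fix 0<q<1 and α>−1, and let T̃_k^{(α)} = Σ_{j=0}^{k} π̃_j^{(α)}. Then for all integers m≥0 and ℓ≥0: Σ_{k=0}^{m−1} (q^k;q^{−1})_ℓ · T̃_k^{(α)} / (λ̃_k^{(α)} π̃_k^{(α)}) = ( q^{ℓ+α+1} (q^{m−ℓ};q)_{ℓ+1} / ( (1−q^{α+1})(1−q^{ℓ+α+2}) ) ) · ( q^{ℓ+1}(1−q^{α+1})/(1−q^{ℓ+1}) + 1 − γ(m+1,α+1;q) ). -/

import Mathlib

open Finset

/-- The finite q-Pochhammer symbol `(a;q)_n = ∏_{k=0}^{n−1} (1 − a q^k)`. -/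
noncomputable def qPochN (q a : ℝ) (n : ℕ) : ℝ :=
  ∏ k ∈ Finset.range n, (1 - a * q ^ k)

/-- The infinite q-Pochhammer symbol `(a;q)_∞ = ∏_{k=0}^∞ (1 − a q^k)`. -/
noncomputable def qPochInf (q a : ℝ) : ℝ :=
  ∏' k : ℕ, (1 - a * q ^ k)

/-- `γ(u,v;q) = (q^u;q)_∞/(q^{u+v};q)_∞`. -/
noncomputable def qgamma (q u v : ℝ) : ℝ :=
  qPochInf q (q ^ u) / qPochInf q (q ^ (u + v))

/-- `r_n^{(α)} = (1−γ(n+1,α+1;q))/(1−γ(n,α+1;q))`. -/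
noncomputable def rQL (q α : ℝ) (n : ℕ) : ℝ :=
  (1 - qgamma q ((n : ℝ) + 1) (α + 1)) / (1 - qgamma q (n : ℝ) (α + 1))

/-- The birth rates `λ̃_n^{(α)} = q^{−2n−α−1}(1−q^{n+α+1})/r_n^{(α)}`. -/
noncomputable def lamQL (q α : ℝ) (n : ℕ) : ℝ :=
  q ^ (-(2 * (n : ℝ)) - α - 1) * (1 - q ^ ((n : ℝ) + α + 1)) / rQL q α n

/-- The death rates `μ̃_n^{(α)} = q^{−2n−α}(1−q^n) r_n^{(α)}`. -/
noncomputable def muQL (q α : ℝ) (n : ℕ) : ℝ :=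
  q ^ (-(2 * (n : ℝ)) - α) * (1 - q ^ (n : ℝ)) * rQL q α n

/-- `π̃_n^{(α)} = ∏_{k=0}^{n−1} λ̃_k^{(α)}/μ̃_{k+1}^{(α)}` (with `π̃_0 = 1`). -/
noncomputable def piQL (q α : ℝ) (n : ℕ) : ℝ :=
  ∏ k ∈ Finset.range n, lamQL q α k / muQL q α (k + 1)

/-- `T̃_k^{(α)} = Σ_{j=0}^{k} π̃_j^{(α)}`. -/
noncomputable def TQL (q α : ℝ) (k : ℕ) : ℝ :=
  ∑ j ∈ Finset.range (k + 1), piQL q α j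

/-- The descending q-Pochhammer symbol `(q^k;q^{−1})_ℓ = ∏_{i=0}^{ℓ−1}(1−q^{k−i})`. -/
noncomputable def qPochDesc (q : ℝ) (k ℓ : ℕ) : ℝ :=
  ∏ i ∈ Finset.range ℓ, (1 - q ^ ((k : ℝ) - (i : ℝ)))


section Aux
open Real
set_option maxHeartbeats 1000000
variable {q : ℝ}


lemma qp_fac_pos (hq0 : 0 < q) (hq1 : q < 1) {a : ℝ} (ha0 : 0 ≤ a) (ha1 : a < 1) (k : ℕ) :
    0 < 1 - a * q ^ k := by
  have h1 : a * q ^ k ≤ a * 1 :=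
    mul_le_mul_of_nonneg_left (pow_le_one₀ hq0.le hq1.le) ha0
  nlinarith

lemma qp_summable_log (hq0 : 0 < q) (hq1 : q < 1) {a : ℝ} (ha0 : 0 ≤ a) (ha1 : a < 1) :
    Summable fun k : ℕ => Real.log (1 - a * q ^ k) := by
  have hfac := qp_fac_pos hq0 hq1 ha0 ha1
  rw [← summable_neg_iff]
  have hgeom : Summable fun k : ℕ => (1 - a)⁻¹ * (a * q ^ k) :=
    (((summable_geometric_of_lt_one hq0.le hq1).mul_left a)).mul_left (1 - a)⁻¹
  apply Summable.of_nonneg_of_le (fun k => ?_) (fun k => ?_) hgeom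
  · have hle1 : 1 - a * q ^ k ≤ 1 := by
      nlinarith [mul_nonneg ha0 (pow_nonneg hq0.le k)]
    have := Real.log_nonpos (hfac k).le hle1
    linarith
  · have h2 : -Real.log (1 - a * q ^ k) = Real.log (1 - a * q ^ k)⁻¹ := (Real.log_inv _).symm
    rw [h2]
    have h3 := Real.log_le_sub_one_of_pos (inv_pos.2 (hfac k))
    have h4 : (1 - a * q ^ k)⁻¹ - 1 = (a * q ^ k) / (1 - a * q ^ k) := by
      rw [eq_div_iff (hfac k).ne', sub_mul, inv_mul_cancel₀ (hfac k).ne']; ring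
    have h5 : (a * q ^ k) / (1 - a * q ^ k) ≤ (1 - a)⁻¹ * (a * q ^ k) := by
      rw [div_le_iff₀ (hfac k)]
      have hqk : q ^ k ≤ 1 := pow_le_one₀ hq0.le hq1.le
      have hd : 1 - a ≤ 1 - a * q ^ k := by nlinarith
      have hnn : 0 ≤ a * q ^ k := mul_nonneg ha0 (pow_nonneg hq0.le k)
      have h1a : 0 < 1 - a := by linarith
      calc a * q ^ k = ((1-a)⁻¹ * (a * q^k)) * (1 - a) := by field_simp
        _ ≤ ((1-a)⁻¹ * (a * q^k)) * (1 - a * q ^ k) := by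
            apply mul_le_mul_of_nonneg_left hd
            positivity
    linarith

lemma qp_hasProd (hq0 : 0 < q) (hq1 : q < 1) {a : ℝ} (ha0 : 0 ≤ a) (ha1 : a < 1) :
    HasProd (fun k : ℕ => 1 - a * q ^ k)
      (Real.exp (∑' k : ℕ, Real.log (1 - a * q ^ k))) := by
  have hfac := qp_fac_pos hq0 hq1 ha0 ha1
  have hs := (qp_summable_log hq0 hq1 ha0 ha1).hasSum
  refine hs.rexp.congr_fun fun k => ?_
  simp [Real.exp_log (hfac k)]

lemma qp_multipliable (hq0 : 0 < q) (hq1 : q < 1) {a : ℝ} (ha0 : 0 ≤ a) (ha1 : a < 1) :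
    Multipliable fun k : ℕ => 1 - a * q ^ k :=
  ⟨_, qp_hasProd hq0 hq1 ha0 ha1⟩

lemma qp_pos (hq0 : 0 < q) (hq1 : q < 1) {a : ℝ} (ha0 : 0 ≤ a) (ha1 : a < 1) :
    0 < ∏' k : ℕ, (1 - a * q ^ k) := by
  rw [(qp_hasProd hq0 hq1 ha0 ha1).tprod_eq]
  exact Real.exp_pos _


lemma hasProd_zero_of_zero {f : ℕ → ℝ} (h : f 0 = 0) : HasProd f 0 := by
  rw [HasProd]
  refine Filter.Tendsto.congr' ?_ tendsto_const_nhds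
  filter_upwards [Filter.eventually_atTop.2 ⟨{0}, fun s hs => hs⟩] with s hs
  exact (Finset.prod_eq_zero (hs (Finset.mem_singleton_self 0)) h).symm

lemma qp_mult' (hq0 : 0 < q) (hq1 : q < 1) {a : ℝ} (ha0 : 0 ≤ a) (ha1 : a ≤ 1) :
    Multipliable fun k : ℕ => 1 - a * q ^ k := by
  rcases eq_or_lt_of_le ha1 with rfl | h
  · exact ⟨0, hasProd_zero_of_zero (by simp)⟩
  · exact qp_multipliable hq0 hq1 ha0 h

lemma qPochInf_shift (hq0 : 0 < q) (hq1 : q < 1) {u : ℝ} (hu : 0 ≤ u) :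
    qPochInf q (q ^ u) = (1 - q ^ u) * qPochInf q (q ^ (u + 1)) := by
  have ha0 : (0:ℝ) ≤ q ^ u := (Real.rpow_pos_of_pos hq0 u).le
  have hkey : ∀ k : ℕ, 1 - q ^ u * q ^ (k + 1) = 1 - q ^ (u + 1) * q ^ k := by
    intro k
    rw [Real.rpow_add hq0, Real.rpow_one, pow_succ]
    ring
  have hm1 : Multipliable fun k : ℕ => 1 - q ^ u * q ^ (k + 1) := by
    rw [multipliable_congr hkey]
    exact qp_multipliable hq0 hq1 (Real.rpow_pos_of_pos hq0 _).le
      (Real.rpow_lt_one hq0.le hq1 (by linarith))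
  simp only [qPochInf]
  rw [tprod_eq_zero_mul' hm1]
  congr 1
  · simp
  · exact tprod_congr hkey

lemma qPochInf_pos (hq0 : 0 < q) (hq1 : q < 1) {u : ℝ} (hu : 0 < u) :
    0 < qPochInf q (q ^ u) :=
  qp_pos hq0 hq1 (Real.rpow_pos_of_pos hq0 u).le (Real.rpow_lt_one hq0.le hq1 hu)

lemma qPochInf_le (hq0 : 0 < q) (hq1 : q < 1) {u v : ℝ} (hu : 0 < u) (huv : u ≤ v) :
    qPochInf q (q ^ u) ≤ qPochInf q (q ^ v) := by
  have hv : 0 < v := lt_of_lt_of_le hu huv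
  have hau : q ^ u < 1 := Real.rpow_lt_one hq0.le hq1 hu
  have hav : q ^ v < 1 := Real.rpow_lt_one hq0.le hq1 hv
  have hau0 : (0:ℝ) < q ^ u := Real.rpow_pos_of_pos hq0 u
  have hav0 : (0:ℝ) < q ^ v := Real.rpow_pos_of_pos hq0 v
  rw [qPochInf, qPochInf, (qp_hasProd hq0 hq1 hau0.le hau).tprod_eq,
    (qp_hasProd hq0 hq1 hav0.le hav).tprod_eq]
  apply Real.exp_le_exp.2
  apply Summable.tsum_le_tsum _ (qp_summable_log hq0 hq1 hau0.le hau) (qp_summable_log hq0 hq1 hav0.le hav)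
  intro k
  apply Real.log_le_log (qp_fac_pos hq0 hq1 hau0.le hau k)
  have : q ^ v ≤ q ^ u := Real.rpow_le_rpow_of_exponent_ge hq0 hq1.le huv
  have hk : (0:ℝ) ≤ q ^ k := pow_nonneg hq0.le k
  nlinarith [mul_le_mul_of_nonneg_right this hk]

variable {α : ℝ}

lemma qgamma_zero (hq0 : 0 < q) (hq1 : q < 1) :
    qgamma q 0 (α + 1) = 0 := by
  have h0 : (1:ℝ) - 1 * q ^ (0:ℕ) = 0 := by simp
  have hz : qPochInf q (1:ℝ) = 0 := by
    simpa [qPochInf] using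
      (hasProd_zero_of_zero (f := fun k : ℕ => 1 - 1 * q ^ k) h0).tprod_eq
  rw [qgamma, Real.rpow_zero, hz, zero_div]

lemma qgamma_rec (hq0 : 0 < q) (hq1 : q < 1) (hα : -1 < α) {u : ℝ} (hu : 0 ≤ u) :
    qgamma q (u + 1) (α + 1) * (1 - q ^ u)
      = qgamma q u (α + 1) * (1 - q ^ (u + (α + 1))) := by
  have hv : 0 < u + (α + 1) := by linarith
  have hN : qPochInf q (q ^ u) = (1 - q ^ u) * qPochInf q (q ^ (u + 1)) :=
    qPochInf_shift hq0 hq1 hu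
  have hD : qPochInf q (q ^ (u + (α + 1)))
      = (1 - q ^ (u + (α + 1))) * qPochInf q (q ^ (u + (α + 1) + 1)) :=
    qPochInf_shift hq0 hq1 hv.le
  have hD' : qPochInf q (q ^ (u + 1 + (α + 1))) = qPochInf q (q ^ (u + (α + 1) + 1)) := by
    rw [show u + 1 + (α + 1) = u + (α + 1) + 1 by ring]
  have hDpos : 0 < qPochInf q (q ^ (u + (α + 1) + 1)) := qPochInf_pos hq0 hq1 (by linarith)
  have hne : (0:ℝ) < 1 - q ^ (u + (α + 1)) := by
    have := Real.rpow_lt_one hq0.le hq1 hv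
    linarith
  rw [qgamma, qgamma, hN, hD, hD']
  field_simp

lemma qgamma_nonneg (hq0 : 0 < q) (hq1 : q < 1) (hα : -1 < α) {u : ℝ} (hu : 0 ≤ u) :
    0 ≤ qgamma q u (α + 1) := by
  rcases eq_or_lt_of_le hu with h | h
  · rw [← h, qgamma_zero hq0 hq1]
  · have h1 : 0 < qPochInf q (q ^ u) := qPochInf_pos hq0 hq1 h
    have h2 : 0 < qPochInf q (q ^ (u + (α + 1))) := qPochInf_pos hq0 hq1 (by linarith)
    exact (div_pos h1 h2).le

lemma qgamma_lt_one (hq0 : 0 < q) (hq1 : q < 1) (hα : -1 < α) {u : ℝ} (hu : 0 ≤ u) :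
    qgamma q u (α + 1) < 1 := by
  have hv : 0 < u + (α + 1) := by linarith
  have hDpos : 0 < qPochInf q (q ^ (u + (α + 1))) := qPochInf_pos hq0 hq1 hv
  rw [qgamma, div_lt_one hDpos]
  have hN : qPochInf q (q ^ u) = (1 - q ^ u) * qPochInf q (q ^ (u + 1)) :=
    qPochInf_shift hq0 hq1 hu
  have hD : qPochInf q (q ^ (u + (α + 1)))
      = (1 - q ^ (u + (α + 1))) * qPochInf q (q ^ (u + (α + 1) + 1)) :=
    qPochInf_shift hq0 hq1 hv.le
  have hle : qPochInf q (q ^ (u + 1)) ≤ qPochInf q (q ^ (u + (α + 1) + 1)) :=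
    qPochInf_le hq0 hq1 (by linarith) (by linarith)
  have hD'pos : 0 < qPochInf q (q ^ (u + (α + 1) + 1)) := qPochInf_pos hq0 hq1 (by linarith)
  have hNpos : 0 < qPochInf q (q ^ (u + 1)) := qPochInf_pos hq0 hq1 (by linarith)
  have h1 : q ^ u ≤ 1 := Real.rpow_le_one hq0.le hq1.le hu
  have h2 : q ^ (u + (α + 1)) < q ^ u := Real.rpow_lt_rpow_of_exponent_gt hq0 hq1 (by linarith)
  rw [hN, hD]
  nlinarith

/-- `Γ n = γ(n, α+1; q)`. -/
noncomputable def Gam (q α : ℝ) (n : ℕ) : ℝ := qgamma q (n : ℝ) (α + 1)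

lemma Gam_zero (hq0 : 0 < q) (hq1 : q < 1) : Gam q α 0 = 0 := by
  simpa [Gam] using qgamma_zero (α := α) hq0 hq1

lemma Gam_lt_one (hq0 : 0 < q) (hq1 : q < 1) (hα : -1 < α) (n : ℕ) : Gam q α n < 1 :=
  qgamma_lt_one hq0 hq1 hα (Nat.cast_nonneg n)

lemma Gam_nonneg (hq0 : 0 < q) (hq1 : q < 1) (hα : -1 < α) (n : ℕ) : 0 ≤ Gam q α n :=
  qgamma_nonneg hq0 hq1 hα (Nat.cast_nonneg n)

lemma Gam_pos (hq0 : 0 < q) (hq1 : q < 1) (hα : -1 < α) (n : ℕ) : 0 < Gam q α (n + 1) := by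
  have h0 : (0:ℝ) < ((n:ℝ) + 1) := by positivity
  have h1 : 0 < qPochInf q (q ^ (((n:ℕ) + 1 : ℕ) : ℝ)) := by
    rw [show ((((n:ℕ) + 1 : ℕ)) : ℝ) = (n:ℝ) + 1 by push_cast; ring]
    exact qPochInf_pos hq0 hq1 h0
  have h2 : 0 < qPochInf q (q ^ ((((n:ℕ) + 1 : ℕ)) + (α + 1) : ℝ)) := by
    rw [show (((((n:ℕ) + 1 : ℕ)) : ℝ) + (α + 1)) = (n:ℝ) + 1 + (α + 1) by push_cast; ring]
    exact qPochInf_pos hq0 hq1 (by linarith)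
  exact div_pos h1 h2

lemma Gam_rec (hq0 : 0 < q) (hq1 : q < 1) (hα : -1 < α) (n : ℕ) :
    Gam q α (n + 1) * (1 - q ^ (n : ℝ)) = Gam q α n * (1 - q ^ ((n : ℝ) + α + 1)) := by
  have := qgamma_rec hq0 hq1 hα (u := (n : ℝ)) (Nat.cast_nonneg n)
  rw [Gam, Gam, show (((n : ℕ) + 1 : ℕ) : ℝ) = (n:ℝ) + 1 by push_cast; ring,
    show (n:ℝ) + α + 1 = (n:ℝ) + (α + 1) by ring]
  exact this

/-- `g n = 1 - Γ n`. -/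
noncomputable def gQ (q α : ℝ) (n : ℕ) : ℝ := 1 - Gam q α n

lemma gQ_pos (hq0 : 0 < q) (hq1 : q < 1) (hα : -1 < α) (n : ℕ) : 0 < gQ q α n := by
  have := Gam_lt_one hq0 hq1 hα (q := q) n
  rw [gQ]; linarith

lemma gQ_zero (hq0 : 0 < q) (hq1 : q < 1) : gQ q α 0 = 1 := by
  rw [gQ, Gam_zero hq0 hq1, sub_zero]

lemma rQL_eq (n : ℕ) : rQL q α n = gQ q α (n + 1) / gQ q α n := by
  rw [rQL, gQ, gQ, Gam, Gam, show (((n : ℕ) + 1 : ℕ) : ℝ) = (n : ℝ) + 1 by push_cast; ring]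

lemma one_sub_rpow_pos (hq0 : 0 < q) (hq1 : q < 1) {x : ℝ} (hx : 0 < x) :
    0 < 1 - q ^ x := by
  have := Real.rpow_lt_one hq0.le hq1 hx
  linarith

lemma rpow_pos' (hq0 : 0 < q) (x : ℝ) : 0 < q ^ x := Real.rpow_pos_of_pos hq0 x

lemma Delta_eq (hq0 : 0 < q) (hq1 : q < 1) (hα : -1 < α) (n : ℕ) :
    (gQ q α n - gQ q α (n + 1)) * (1 - q ^ ((n : ℝ) + α + 1))
      = Gam q α (n + 1) * q ^ (n : ℝ) * (1 - q ^ (α + 1)) := by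
  have hrec := Gam_rec hq0 hq1 hα n
  have hsplit : q ^ ((n : ℝ) + α + 1) = q ^ (n : ℝ) * q ^ (α + 1) := by
    rw [show (n : ℝ) + α + 1 = (n : ℝ) + (α + 1) by ring, Real.rpow_add hq0]
  rw [hsplit] at hrec ⊢
  rw [gQ, gQ]
  linear_combination hrec

lemma Dstep (hq0 : 0 < q) (hq1 : q < 1) (hα : -1 < α) (n : ℕ) :
    (gQ q α (n + 1) - gQ q α (n + 2)) * (1 - q ^ ((n : ℝ) + 1))
      = (gQ q α n - gQ q α (n + 1)) * q * (1 - q ^ ((n : ℝ) + α + 1)) := by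
  have D1 := Delta_eq hq0 hq1 hα n
  have D2 := Delta_eq hq0 hq1 hα (n + 1)
  have R2 := Gam_rec hq0 hq1 hα (n + 1)
  have hc : (((n : ℕ) + 1 : ℕ) : ℝ) = (n : ℝ) + 1 := by push_cast; ring
  rw [hc] at D2 R2
  have e1 : q ^ ((n : ℝ) + 1) = q * q ^ (n : ℝ) := by
    rw [show (n : ℝ) + 1 = 1 + (n : ℝ) by ring, Real.rpow_add hq0, Real.rpow_one]
  have e2 : q ^ ((n : ℝ) + 1 + α + 1) = q * q ^ (n : ℝ) * q ^ (α + 1) := by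
    rw [show (n : ℝ) + 1 + α + 1 = (1 + (n : ℝ)) + (α + 1) by ring, Real.rpow_add hq0,
      Real.rpow_add hq0, Real.rpow_one]
  have e3 : q ^ ((n : ℝ) + α + 1) = q ^ (n : ℝ) * q ^ (α + 1) := by
    rw [show (n : ℝ) + α + 1 = (n : ℝ) + (α + 1) by ring, Real.rpow_add hq0]
  rw [e2] at D2 R2
  rw [e3] at D1 ⊢
  rw [e1] at D2 R2 ⊢
  have hne : 1 - q * q ^ (n : ℝ) * q ^ (α + 1) ≠ 0 := by
    have : 0 < 1 - q ^ ((n : ℝ) + α + 2) :=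
      one_sub_rpow_pos hq0 hq1 (by linarith [show (0:ℝ) ≤ (n:ℝ) from Nat.cast_nonneg n])
    rw [show (n : ℝ) + α + 2 = (1 + (n : ℝ)) + (α + 1) by ring, Real.rpow_add hq0,
      Real.rpow_add hq0, Real.rpow_one] at this
    linarith
  have hmain : ((gQ q α (n + 1) - gQ q α (n + 2)) * (1 - q * q ^ (n : ℝ))
      - (gQ q α n - gQ q α (n + 1)) * q * (1 - q ^ (n : ℝ) * q ^ (α + 1)))
      * (1 - q * q ^ (n : ℝ) * q ^ (α + 1)) = 0 := by
    linear_combination (1 - q * q ^ (n : ℝ)) * D2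
      + q * q ^ (n : ℝ) * (1 - q ^ (α + 1)) * R2
      - q * (1 - q * q ^ (n : ℝ) * q ^ (α + 1)) * D1
  rcases mul_eq_zero.1 hmain with h | h
  · linarith
  · exact absurd h hne

lemma lam_mu_ratio (hq0 : 0 < q) (hq1 : q < 1) (hα : -1 < α) (n : ℕ) :
    lamQL q α n / muQL q α (n + 1)
      = q * (1 - q ^ ((n : ℝ) + α + 1)) * gQ q α n
        / ((1 - q ^ ((n : ℝ) + 1)) * gQ q α (n + 2)) := by
  have hc : (((n : ℕ) + 1 : ℕ) : ℝ) = (n : ℝ) + 1 := by push_cast; ring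
  have hp : q ^ (-(2 * (n : ℝ)) - α - 1) = q * q ^ (-(2 * ((n : ℝ) + 1)) - α) := by
    rw [show -(2 * (n : ℝ)) - α - 1 = 1 + (-(2 * ((n : ℝ) + 1)) - α) by ring,
      Real.rpow_add hq0, Real.rpow_one]
  have hX : (0:ℝ) < q ^ (-(2 * ((n : ℝ) + 1)) - α) := rpow_pos' hq0 _
  have hgn := gQ_pos hq0 hq1 hα n
  have hgn1 := gQ_pos hq0 hq1 hα (n + 1)
  have hgn2 := gQ_pos hq0 hq1 hα (n + 2)
  have hF := one_sub_rpow_pos hq0 hq1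
    (show (0:ℝ) < (n : ℝ) + 1 by positivity)
  rw [lamQL, muQL, rQL_eq, rQL_eq, hc, hp]
  rw [show (n : ℕ) + 1 + 1 = n + 2 by ring]
  field_simp

lemma piQL_eq (hq0 : 0 < q) (hq1 : q < 1) (hα : -1 < α) (n : ℕ) :
    piQL q α n
      = (gQ q α 1 / Gam q α 1) * (1 / gQ q α (n + 1) - 1 / gQ q α n) := by
  have hΓ1 : (0:ℝ) < Gam q α 1 := Gam_pos hq0 hq1 hα 0
  have hg1 : (0:ℝ) < gQ q α 1 := gQ_pos hq0 hq1 hα 1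
  induction n with
  | zero =>
    rw [piQL, Finset.range_zero, Finset.prod_empty, Nat.zero_add, gQ_zero hq0 hq1]
    have hΓg : Gam q α 1 = 1 - gQ q α 1 := by rw [gQ]; ring
    rw [hΓg]
    have h1 : 1 - gQ q α 1 ≠ 0 := by rw [← hΓg]; exact hΓ1.ne'
    field_simp
  | succ n ih =>
    have hgn := gQ_pos hq0 hq1 hα n
    have hgn1 := gQ_pos hq0 hq1 hα (n + 1)
    have hgn2 := gQ_pos hq0 hq1 hα (n + 2)
    have hF := one_sub_rpow_pos hq0 hq1 (show (0:ℝ) < (n : ℝ) + 1 by positivity)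
    have hE := one_sub_rpow_pos hq0 hq1
      (show (0:ℝ) < (n : ℝ) + α + 1 by
        have : (0:ℝ) ≤ (n : ℝ) := Nat.cast_nonneg n
        linarith)
    have hstep : piQL q α (n + 1) = piQL q α n * (lamQL q α n / muQL q α (n + 1)) := by
      rw [piQL, piQL, Finset.prod_range_succ]
    rw [hstep, ih, lam_mu_ratio hq0 hq1 hα n, show (n : ℕ) + 1 + 1 = n + 2 by ring,
      mul_assoc]
    congr 1
    have hD := Dstep hq0 hq1 hα n
    field_simp
    linear_combination (-1) * hD

lemma TQL_eq (hq0 : 0 < q) (hq1 : q < 1) (hα : -1 < α) (k : ℕ) :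
    TQL q α k = (gQ q α 1 / Gam q α 1) * (1 / gQ q α (k + 1) - 1) := by
  have hΓ1 : (0:ℝ) < Gam q α 1 := Gam_pos hq0 hq1 hα 0
  have hg1 : (0:ℝ) < gQ q α 1 := gQ_pos hq0 hq1 hα 1
  induction k with
  | zero =>
    rw [TQL, Finset.sum_range_one, piQL_eq hq0 hq1 hα 0, Nat.zero_add, gQ_zero hq0 hq1]
    ring
  | succ k ih =>
    rw [TQL, Finset.sum_range_succ, ← TQL, ih, piQL_eq hq0 hq1 hα (k + 1),
      show (k : ℕ) + 1 + 1 = k + 2 by ring]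
    ring

lemma KEY (hq0 : 0 < q) (hq1 : q < 1) (hα : -1 < α) (k : ℕ) :
    TQL q α k / (lamQL q α k * piQL q α k)
      = q ^ ((k : ℝ) + α + 1) * gQ q α (k + 1) / (1 - q ^ (α + 1)) := by
  have hΓ1 : (0:ℝ) < Gam q α 1 := Gam_pos hq0 hq1 hα 0
  have hΓk : (0:ℝ) < Gam q α (k + 1) := Gam_pos hq0 hq1 hα k
  have hg1 : (0:ℝ) < gQ q α 1 := gQ_pos hq0 hq1 hα 1
  have hgk := gQ_pos hq0 hq1 hα k
  have hgk1 := gQ_pos hq0 hq1 hα (k + 1)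
  have hcast : (0:ℝ) ≤ (k : ℝ) := Nat.cast_nonneg k
  have hE := one_sub_rpow_pos hq0 hq1 (show (0:ℝ) < (k : ℝ) + α + 1 by linarith)
  have hA := one_sub_rpow_pos hq0 hq1 (show (0:ℝ) < α + 1 by linarith)
  have hP1 : (0:ℝ) < q ^ (k : ℝ) := rpow_pos' hq0 _
  have hP2 : (0:ℝ) < q ^ ((k : ℝ) + α + 1) := rpow_pos' hq0 _
  have hXdef : q ^ (-(2 * (k : ℝ)) - α - 1) = (q ^ (k : ℝ) * q ^ ((k : ℝ) + α + 1))⁻¹ := by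
    rw [show -(2 * (k : ℝ)) - α - 1 = -((k : ℝ) + ((k : ℝ) + α + 1)) by ring,
      Real.rpow_neg hq0.le, Real.rpow_add hq0]
  have hGam : Gam q α (k + 1) = 1 - gQ q α (k + 1) := by rw [gQ]; ring
  have hDelta : gQ q α k - gQ q α (k + 1)
      = Gam q α (k + 1) * q ^ (k : ℝ) * (1 - q ^ (α + 1)) / (1 - q ^ ((k : ℝ) + α + 1)) := by
    rw [eq_div_iff hE.ne']
    exact Delta_eq hq0 hq1 hα k
  have hc : gQ q α 1 / Gam q α 1 ≠ 0 := (div_pos hg1 hΓ1).ne'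
  have hlam_pi : lamQL q α k * piQL q α k
      = (gQ q α 1 / Gam q α 1) * Gam q α (k + 1) * (1 - q ^ (α + 1))
        / (q ^ ((k : ℝ) + α + 1) * gQ q α (k + 1) ^ 2) := by
    rw [lamQL, rQL_eq, piQL_eq hq0 hq1 hα k, hXdef,
      div_sub_div _ _ hgk1.ne' hgk.ne', one_mul, mul_one, hDelta]
    field_simp
  rw [TQL_eq hq0 hq1 hα k, hlam_pi, hGam]
  have h1g : 1 - gQ q α (k + 1) ≠ 0 := by rw [← hGam]; exact hΓk.ne'
  field_simp

lemma prodP_left (m ℓ : ℕ) :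
    ∏ i ∈ Finset.range (ℓ + 1), (1 - q ^ ((m : ℝ) - (ℓ : ℝ) + (i : ℝ)))
      = qPochDesc q m ℓ * (1 - q ^ ((m : ℝ) - (ℓ : ℝ))) := by
  have h := Finset.prod_range_reflect
    (fun i : ℕ => 1 - q ^ ((m : ℝ) - (ℓ : ℝ) + (i : ℝ))) (ℓ + 1)
  rw [← h]
  have hcongr : ∀ j ∈ Finset.range (ℓ + 1),
      1 - q ^ ((m : ℝ) - (ℓ : ℝ) + ((ℓ + 1 - 1 - j : ℕ) : ℝ))
        = 1 - q ^ ((m : ℝ) - (j : ℝ)) := by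
    intro j hj
    have hj' : j ≤ ℓ := Nat.lt_succ_iff.1 (Finset.mem_range.1 hj)
    have : ((ℓ + 1 - 1 - j : ℕ) : ℝ) = (ℓ : ℝ) - (j : ℝ) := by
      rw [show ℓ + 1 - 1 - j = ℓ - j by omega, Nat.cast_sub hj']
    rw [this, show (m : ℝ) - (ℓ : ℝ) + ((ℓ : ℝ) - (j : ℝ)) = (m : ℝ) - (j : ℝ) by ring]
  rw [Finset.prod_congr rfl hcongr, Finset.prod_range_succ, qPochDesc]

lemma prodP_right (m ℓ : ℕ) :
    ∏ i ∈ Finset.range (ℓ + 1), (1 - q ^ (((m + 1 : ℕ) : ℝ) - (ℓ : ℝ) + (i : ℝ)))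
      = qPochDesc q m ℓ * (1 - q ^ ((m : ℝ) + 1)) := by
  have h := Finset.prod_range_reflect
    (fun i : ℕ => 1 - q ^ (((m + 1 : ℕ) : ℝ) - (ℓ : ℝ) + (i : ℝ))) (ℓ + 1)
  rw [← h]
  have hcongr : ∀ j ∈ Finset.range (ℓ + 1),
      1 - q ^ (((m + 1 : ℕ) : ℝ) - (ℓ : ℝ) + ((ℓ + 1 - 1 - j : ℕ) : ℝ))
        = 1 - q ^ ((m : ℝ) + 1 - (j : ℝ)) := by
    intro j hj
    have hj' : j ≤ ℓ := Nat.lt_succ_iff.1 (Finset.mem_range.1 hj)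
    have h1 : ((ℓ + 1 - 1 - j : ℕ) : ℝ) = (ℓ : ℝ) - (j : ℝ) := by
      rw [show ℓ + 1 - 1 - j = ℓ - j by omega, Nat.cast_sub hj']
    rw [h1, show ((m + 1 : ℕ) : ℝ) - (ℓ : ℝ) + ((ℓ : ℝ) - (j : ℝ))
      = (m : ℝ) + 1 - (j : ℝ) by push_cast; ring]
  rw [Finset.prod_congr rfl hcongr, Finset.prod_range_succ']
  have h0 : 1 - q ^ ((m : ℝ) + 1 - ((0 : ℕ) : ℝ)) = 1 - q ^ ((m : ℝ) + 1) := by norm_num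
  have h2 : ∀ j ∈ Finset.range ℓ,
      1 - q ^ ((m : ℝ) + 1 - ((j + 1 : ℕ) : ℝ)) = 1 - q ^ ((m : ℝ) - (j : ℝ)) := by
    intro j hj
    rw [show (m : ℝ) + 1 - ((j + 1 : ℕ) : ℝ) = (m : ℝ) - (j : ℝ) by push_cast; ring]
  rw [Finset.prod_congr rfl h2, h0, qPochDesc]

lemma step_alg (L A M Q D G : ℝ) (hL : L ≠ 0) (hA : 1 - A ≠ 0) (hB : 1 - L*A*Q ≠ 0)
    (hLq : 1 - L*Q ≠ 0) (hMq : 1 - M*Q ≠ 0) :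
    L*A * (D*(1 - M/L)) / ((1-A)*(1-L*A*Q)) * (L*Q*(1-A)/(1-L*Q) + 1 - G)
        + D*(M*A*(1-G)/(1-A))
      = L*A * (D*(1-M*Q)) / ((1-A)*(1-L*A*Q))
          * (L*Q*(1-A)/(1-L*Q) + 1 - G*(1-M*Q*A)/(1-M*Q)) := by
  field_simp
  ring

end Aux

/-- Equation (6.45): for all `m, ℓ ≥ 0`,
`Σ_{k=0}^{m−1} (q^k;q^{−1})_ℓ T̃_k/(λ̃_k π̃_k)
  = (q^{ℓ+α+1}(q^{m−ℓ};q)_{ℓ+1}/((1−q^{α+1})(1−q^{ℓ+α+2})))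
    · (q^{ℓ+1}(1−q^{α+1})/(1−q^{ℓ+1}) + 1 − γ(m+1,α+1;q))`. -/
theorem modified_qLaguerre_T_sum_finite_explicit
    (q α : ℝ) (hq0 : 0 < q) (hq1 : q < 1) (hα : -1 < α) (m ℓ : ℕ) :
    ∑ k ∈ Finset.range m,
        qPochDesc q k ℓ * TQL q α k / (lamQL q α k * piQL q α k)
      = q ^ ((ℓ : ℝ) + α + 1)
          * (∏ i ∈ Finset.range (ℓ + 1), (1 - q ^ ((m : ℝ) - (ℓ : ℝ) + (i : ℝ))))
          / ((1 - q ^ (α + 1)) * (1 - q ^ ((ℓ : ℝ) + α + 2)))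
        * (q ^ ((ℓ : ℝ) + 1) * (1 - q ^ (α + 1)) / (1 - q ^ ((ℓ : ℝ) + 1))
            + 1 - qgamma q ((m : ℝ) + 1) (α + 1)) := by
  induction m with
  | zero =>
    rw [Finset.sum_range_zero]
    have hz : (1:ℝ) - q ^ (((0:ℕ):ℝ) - (ℓ:ℝ) + (ℓ:ℝ)) = 0 := by
      rw [show ((0:ℕ):ℝ) - (ℓ:ℝ) + (ℓ:ℝ) = 0 by push_cast; ring, Real.rpow_zero]
      ring
    rw [Finset.prod_eq_zero (Finset.self_mem_range_succ ℓ) hz]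
    ring
  | succ m ih =>
    rw [Finset.sum_range_succ, ih,
      show qPochDesc q m ℓ * TQL q α m / (lamQL q α m * piQL q α m)
        = qPochDesc q m ℓ * (TQL q α m / (lamQL q α m * piQL q α m)) from mul_div_assoc _ _ _,
      KEY hq0 hq1 hα m]
    have hG1 : qgamma q ((m:ℝ)+1) (α+1) = Gam q α (m+1) := by
      rw [Gam, Nat.cast_add, Nat.cast_one]
    have hG2 : qgamma q (((m+1:ℕ):ℝ)+1) (α+1) = Gam q α (m+2) := by
      rw [Gam, show ((m+2:ℕ):ℝ) = ((m+1:ℕ):ℝ)+1 by push_cast; ring]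
    rw [hG1, hG2, prodP_left (q := q) m ℓ, prodP_right (q := q) m ℓ]
    have hTq : (0:ℝ) < 1 - q ^ ((m:ℝ)+1) := one_sub_rpow_pos hq0 hq1 (by positivity)
    have hrec := Gam_rec hq0 hq1 hα (m+1)
    rw [show (((m+1:ℕ)):ℝ) = (m:ℝ)+1 by push_cast; ring] at hrec
    have hG2val : Gam q α (m+2) = Gam q α (m+1) * (1 - q ^ ((m:ℝ)+1+α+1)) / (1 - q ^ ((m:ℝ)+1)) := by
      rw [eq_div_iff hTq.ne']
      exact hrec
    rw [hG2val, gQ]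
    have e2 : q ^ ((ℓ:ℝ)+α+2) = q ^ (ℓ:ℝ) * q ^ (α+1) * q := by
      rw [show (ℓ:ℝ)+α+2 = (ℓ:ℝ)+(α+1)+1 by ring, Real.rpow_add hq0, Real.rpow_add hq0,
        Real.rpow_one]
    have e3 : q ^ ((ℓ:ℝ)+1) = q ^ (ℓ:ℝ) * q := by
      rw [Real.rpow_add hq0, Real.rpow_one]
    have e6 : q ^ ((m:ℝ)+1) = q ^ (m:ℝ) * q := by rw [Real.rpow_add hq0, Real.rpow_one]
    have hA := one_sub_rpow_pos hq0 hq1 (show (0:ℝ) < α+1 by linarith)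
    have hL : (0:ℝ) < q ^ (ℓ:ℝ) := rpow_pos' hq0 _
    have hLq := one_sub_rpow_pos hq0 hq1 (show (0:ℝ) < (ℓ:ℝ)+1 by positivity)
    have hB := one_sub_rpow_pos hq0 hq1 (show (0:ℝ) < (ℓ:ℝ)+α+2 by
      have h0 : (0:ℝ) ≤ (ℓ:ℝ) := Nat.cast_nonneg ℓ
      linarith)
    have e1 : q ^ ((ℓ:ℝ)+α+1) = q ^ (ℓ:ℝ) * q ^ (α+1) := by
      rw [show (ℓ:ℝ)+α+1 = (ℓ:ℝ)+(α+1) by ring, Real.rpow_add hq0]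
    have e4 : q ^ ((m:ℝ)-(ℓ:ℝ)) = q ^ (m:ℝ) / q ^ (ℓ:ℝ) := Real.rpow_sub hq0 _ _
    have e5 : q ^ ((m:ℝ)+α+1) = q ^ (m:ℝ) * q ^ (α+1) := by
      rw [show (m:ℝ)+α+1 = (m:ℝ)+(α+1) by ring, Real.rpow_add hq0]
    have e7 : q ^ ((m:ℝ)+1+α+1) = q ^ (m:ℝ) * q * q ^ (α+1) := by
      rw [show (m:ℝ)+1+α+1 = ((m:ℝ)+1)+(α+1) by ring, Real.rpow_add hq0, Real.rpow_add hq0,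
        Real.rpow_one]
    have hLq' : 1 - q ^ (ℓ:ℝ) * q ≠ 0 := by rw [← e3]; exact hLq.ne'
    have hB' : 1 - q ^ (ℓ:ℝ) * q ^ (α+1) * q ≠ 0 := by rw [← e2]; exact hB.ne'
    have hTq' : 1 - q ^ (m:ℝ) * q ≠ 0 := by rw [← e6]; exact hTq.ne'
    rw [e1, e2, e3, e4, e5, e6, e7]
    linear_combination step_alg (q ^ (ℓ:ℝ)) (q ^ (α+1)) (q ^ (m:ℝ)) q (qPochDesc q m ℓ)
      (Gam q α (m+1)) hL.ne' hA.ne' hB' hLq' hTq'
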